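/- Let E be a real inner product space, let λ, u ∈ E, g ≥ 0, β > 0, and set z = λ + β • u. Then the following are equivalent: (i) either ‖z‖ ≤ g and λ = z, or ‖z‖ > g and λ = (g/‖z‖) • z; (ii) ‖λ‖ ≤ g and ⟪λ, u⟫ = g‖u‖. -/

import Mathlib

open scoped RealInnerProductSpace

/-- The Tresca friction conditions for the tangential components are equivalent
to the fixed-point equation `λ = [λ + β • u]_g`, where `[·]_g` is the
projection onto the closed ball of radius `g` centered at the origin. -/
theorem tresca_tangential_iff_ball_projection
    {E : Type*} [NormedAddCommGroup E] [InnerProductSpace ℝ E]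
    (lam u : E) (g β : ℝ) (hg : 0 ≤ g) (hβ : 0 < β)
    (z : E) (hz : z = lam + β • u) :
    ((‖z‖ ≤ g ∧ lam = z) ∨ (g < ‖z‖ ∧ lam = (g / ‖z‖) • z)) ↔
      (‖lam‖ ≤ g ∧ ⟪lam, u⟫ = g * ‖u‖) := by
  constructor
  · rintro (⟨hle, hlam⟩ | ⟨hgt, hlam⟩)
    · have h0 : β • u = 0 := by
        have h := hz
        rw [hlam] at h
        exact (left_eq_add.mp h)
      have hu : u = 0 := (smul_eq_zero.mp h0).resolve_left hβ.ne'
      refine ⟨hlam ▸ hle, by simp [hu]⟩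
    · have hzpos : (0:ℝ) < ‖z‖ := lt_of_le_of_lt hg hgt
      have h1 : β • u = z - lam := by rw [hz]; abel
      have h2 : β • u = (1 - g / ‖z‖) • z := by
        rw [h1, hlam, sub_smul, one_smul]
      have hu : u = (β⁻¹ * (1 - g / ‖z‖)) • z := by
        rw [mul_smul, ← h2, inv_smul_smul₀ hβ.ne']
      have hc : 0 ≤ β⁻¹ * (1 - g / ‖z‖) := by
        have h01 : g / ‖z‖ ≤ 1 := by
          rw [div_le_one hzpos]; exact hgt.le
        have hβi : (0:ℝ) ≤ β⁻¹ := inv_nonneg.mpr hβ.le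
        nlinarith
      have hnu : ‖u‖ = (β⁻¹ * (1 - g / ‖z‖)) * ‖z‖ := by
        rw [hu, norm_smul, Real.norm_of_nonneg hc]
      have hnl : ‖lam‖ = g := by
        rw [hlam, norm_smul, Real.norm_of_nonneg (div_nonneg hg hzpos.le),
          div_mul_cancel₀ _ hzpos.ne']
      refine ⟨hnl.le, ?_⟩
      rw [hlam, hu, real_inner_smul_left, real_inner_smul_right,
        real_inner_self_eq_norm_sq, norm_smul, Real.norm_of_nonneg hc]
      field_simp
  · rintro ⟨hle, hinner⟩
    by_cases hu : u = 0
    · left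
      have hzl : z = lam := by rw [hz, hu, smul_zero, add_zero]
      exact ⟨hzl ▸ hle, hzl.symm⟩
    · right
      have hupos : (0:ℝ) < ‖u‖ := norm_pos_iff.mpr hu
      have hCS : ⟪lam, u⟫ ≤ ‖lam‖ * ‖u‖ := real_inner_le_norm lam u
      have hnl : ‖lam‖ = g := by nlinarith
      have heq : ⟪lam, u⟫ = ‖lam‖ * ‖u‖ := by rw [hnl, hinner]
      have key : ‖u‖ • lam = ‖lam‖ • u := (inner_eq_norm_mul_iff_real).mp heq
      have key2 : ‖u‖ • lam = g • u := by rw [key, hnl]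
      have hzu : ‖u‖ • z = (g + β * ‖u‖) • u := by
        rw [hz, smul_add, key2, smul_smul, add_smul, mul_comm]
      have hnz : ‖z‖ = g + β * ‖u‖ := by
        have h := congrArg norm hzu
        rw [norm_smul, norm_smul, Real.norm_of_nonneg hupos.le,
          Real.norm_of_nonneg (by positivity : (0:ℝ) ≤ g + β * ‖u‖)] at h
        have h' : ‖u‖ * ‖z‖ = ‖u‖ * (g + β * ‖u‖) := by rw [h]; ring
        exact mul_left_cancel₀ hupos.ne' h'
      have hgt : g < ‖z‖ := by rw [hnz]; nlinarith
      refine ⟨hgt, ?_⟩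
      apply smul_right_injective E hupos.ne'
      show ‖u‖ • lam = ‖u‖ • ((g / ‖z‖) • z)
      rw [key2, smul_comm, hzu, smul_smul, hnz,
        div_mul_cancel₀ _ (by positivity : (g + β * ‖u‖) ≠ 0)]
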